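/- Let p, q be homogeneous polynomials of the same degree k with q = c(x ∂p/∂y − y ∂p/∂x), and let h(u,v) be a polynomial. Then in polar coordinates the system ẋ = −y + x q(x,y) h(x²+y², p(x,y)), ẏ = x + y q(x,y) h(x²+y², p(x,y)) reduces to dρ/dθ = c ρ^{k+1} h(ρ², ρ^k f(θ)) f'(θ), where f(θ) = p(cos θ, sin θ). -/

import Mathlib

open Real MvPolynomial

lemma aux_hasDerivAt_eval (p : MvPolynomial (Fin 2) ℝ) {a b : ℝ → ℝ} {a' b' : ℝ} {t : ℝ}
    (ha : HasDerivAt a a' t) (hb : HasDerivAt b b' t) :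
    HasDerivAt (fun s => eval ![a s, b s] p)
      (eval ![a t, b t] (pderiv 0 p) * a' + eval ![a t, b t] (pderiv 1 p) * b') t := by
  induction p using MvPolynomial.induction_on with
  | C r => simpa using hasDerivAt_const t r
  | add p1 p2 h1 h2 =>
      have := h1.add h2
      simp only [map_add, eval_add] at this ⊢
      exact this.congr_deriv (by ring)
  | mul_X p1 n h1 =>
      fin_cases n
      · simp only [eval_mul, eval_X, Matrix.cons_val_zero]
        refine (h1.mul ha).congr_deriv ?_
        simp [pderiv_mul, pderiv_X_self, pderiv_X_of_ne]
        ring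
      · simp only [eval_mul, eval_X, Matrix.cons_val_one, Matrix.head_cons]
        refine (h1.mul hb).congr_deriv ?_
        simp [pderiv_mul, pderiv_X_self, pderiv_X_of_ne]
        ring

lemma aux_scale {k : ℕ} {p : MvPolynomial (Fin 2) ℝ} (hp : p.IsHomogeneous k)
    (t : ℝ) (v : Fin 2 → ℝ) :
    eval (fun i => t * v i) p = t ^ k * eval v p := by
  rw [eval_eq, eval_eq, Finset.mul_sum]
  refine Finset.sum_congr rfl fun d hd => ?_
  have hk : (∑ i ∈ d.support, d i) = k := by
    have h1 := hp (mem_support_iff.mp hd)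
    rw [show (∑ i ∈ d.support, d i) = Finsupp.degree d from rfl,
      Finsupp.degree_eq_weight_one]
    exact h1
  calc coeff d p * ∏ i ∈ d.support, (t * v i) ^ d i
      = coeff d p * ((∏ i ∈ d.support, t ^ d i) * ∏ i ∈ d.support, v i ^ d i) := by
        rw [← Finset.prod_mul_distrib]; simp [mul_pow]
    _ = t ^ k * (coeff d p * ∏ i ∈ d.support, v i ^ d i) := by
        rw [Finset.prod_pow_eq_pow_sum, hk]; ring

/-- Theorem 2 (reduction to polar coordinates): with `q = c(x p_y − y p_x)`,
`p` homogeneous of degree `k`, `H = q·h(x²+y², p)`, a solution curve of the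
system written as `(ρ(θ) cos θ, ρ(θ) sin θ)` satisfies
`ρ' = c ρ^{k+1} h(ρ², ρ^k f(θ)) f'(θ)` with `f(θ) = p(cos θ, sin θ)`. -/
theorem stmt15 (k : ℕ) (c : ℝ)
    (p : MvPolynomial (Fin 2) ℝ) (hp : p.IsHomogeneous k)
    (h : MvPolynomial (Fin 2) ℝ)
    (q : ℝ → ℝ → ℝ)
    (hq : ∀ x y, q x y = c * (x * deriv (fun y' => eval ![x, y'] p) y
      - y * deriv (fun x' => eval ![x', y] p) x))
    (f : ℝ → ℝ) (hf : ∀ θ, f θ = eval ![cos θ, sin θ] p)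
    (H : ℝ → ℝ → ℝ)
    (hH : ∀ x y, H x y = q x y * eval ![x ^ 2 + y ^ 2, eval ![x, y] p] h)
    (ρ : ℝ → ℝ) (r θ : ℝ)
    (hρ : HasDerivAt ρ r θ)
    (hxeq : HasDerivAt (fun t => ρ t * cos t)
      (-(ρ θ * sin θ) + (ρ θ * cos θ) * H (ρ θ * cos θ) (ρ θ * sin θ)) θ)
    (hyeq : HasDerivAt (fun t => ρ t * sin t)
      ((ρ θ * cos θ) + (ρ θ * sin θ) * H (ρ θ * cos θ) (ρ θ * sin θ)) θ) :
    r = c * ρ θ ^ (k + 1) * eval ![ρ θ ^ 2, ρ θ ^ k * f θ] h * deriv f θ := by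
  set s := ρ θ with hs
  set Hv := H (s * cos θ) (s * sin θ) with hHv
  -- Step 1: r = s * Hv
  have E1 := (hρ.mul (Real.hasDerivAt_cos θ)).unique hxeq
  have E2 := (hρ.mul (Real.hasDerivAt_sin θ)).unique hyeq
  have pyth := sin_sq_add_cos_sq θ
  have hr : r = s * Hv := by
    rw [← hs] at E1 E2
    linear_combination cos θ * E1 + sin θ * E2 + (s * Hv - r) * pyth
  -- f derivative
  have hff : f = fun t => eval ![cos t, sin t] p := funext hf
  have hfd : HasDerivAt f
      (eval ![cos θ, sin θ] (pderiv 0 p) * (-sin θ)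
        + eval ![cos θ, sin θ] (pderiv 1 p) * cos θ) θ := by
    rw [hff]
    exact aux_hasDerivAt_eval p (Real.hasDerivAt_cos θ) (Real.hasDerivAt_sin θ)
  have hderivf := hfd.deriv
  -- scaling of vectors
  have hvec : ∀ t : ℝ, (![s * cos t, s * sin t] : Fin 2 → ℝ)
      = fun i => s * ![cos t, sin t] i := by
    intro t; funext i; fin_cases i <;> simp
  have hpeval : eval ![s * cos θ, s * sin θ] p = s ^ k * f θ := by
    rw [hvec θ, aux_scale hp, hf]
  -- the key identity via uniqueness of derivative of g
  have hg1 : HasDerivAt (fun t => eval ![s * cos t, s * sin t] p)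
      (eval ![s * cos θ, s * sin θ] (pderiv 0 p) * (s * (-sin θ))
        + eval ![s * cos θ, s * sin θ] (pderiv 1 p) * (s * cos θ)) θ :=
    aux_hasDerivAt_eval p ((Real.hasDerivAt_cos θ).const_mul s)
      ((Real.hasDerivAt_sin θ).const_mul s)
  have hg2 : HasDerivAt (fun t => eval ![s * cos t, s * sin t] p)
      (s ^ k * deriv f θ) θ := by
    have heq : (fun t => eval ![s * cos t, s * sin t] p) = fun t => s ^ k * f t := by
      funext t; rw [hvec t, aux_scale hp, hf]
    rw [heq, hderivf]
    exact hfd.const_mul _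
  have key := hg1.unique hg2
  -- partial derivatives in q
  have hq0 : ∀ x y : ℝ, deriv (fun x' => eval ![x', y] p) x = eval ![x, y] (pderiv 0 p) := by
    intro x y
    have := (aux_hasDerivAt_eval p (hasDerivAt_id x) (hasDerivAt_const x y)).deriv
    simpa using this
  have hq1 : ∀ x y : ℝ, deriv (fun y' => eval ![x, y'] p) y = eval ![x, y] (pderiv 1 p) := by
    intro x y
    have := (aux_hasDerivAt_eval p (hasDerivAt_const y x) (hasDerivAt_id y)).deriv
    simpa using this
  -- assemble
  have hsq : (s * cos θ) ^ 2 + (s * sin θ) ^ 2 = s ^ 2 := by nlinarith [pyth]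
  rw [hr, hHv, hH, hq, hq0, hq1, hsq, hpeval]
  set A := eval ![s ^ 2, s ^ k * f θ] h with hA
  linear_combination (c * s * A) * key
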